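/- Let n ≥ 3 and let σ : Fin n → {-1,1} be an assignment of signs to the edge correlators of the n-cycle such that the number of i with σ i = -1 is even. Then the behavior with ⟨B_i⟩ = 0 and ⟨B_i B_{i+1}⟩ = σ i for all i is noncontextual: it is a convex combination of deterministic ±1 assignments to B_0,…,B_{n-1}. -/

import Mathlib

open Classical

/-- A behavior on the `n`-cycle, given by single-measurement expectations `single i = ⟨B_i⟩`
and edge correlators `edge i = ⟨B_i B_{i+1}⟩` (indices mod `n`), is noncontextual if it is a
convex combination of deterministic ±1 assignments `ε : Fin n → {-1,1}`. -/
def Noncontextual (n : ℕ) [NeZero n] (single edge : Fin n → ℝ) : Prop :=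
  ∃ (m : ℕ) (w : Fin m → ℝ) (ε : Fin m → Fin n → ℝ),
    (∀ j, 0 ≤ w j) ∧ (∑ j, w j) = 1 ∧
    (∀ j i, ε j i = -1 ∨ ε j i = 1) ∧
    (∀ i, (∑ j, w j * ε j i) = single i) ∧
    (∀ i, (∑ j, w j * ε j i * ε j (i + 1)) = edge i)

/-- If `σ : Fin n → {-1,1}` assigns signs to the edge correlators of the `n`-cycle with an
even number of `-1`s, then the behavior with `⟨B_i⟩ = 0` and `⟨B_i B_{i+1}⟩ = σ i` is
noncontextual. -/
theorem even_sign_edge_behavior_noncontextual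
    (n : ℕ) [NeZero n] (hn : 3 ≤ n) (σ : Fin n → ℝ)
    (hσ : ∀ i, σ i = -1 ∨ σ i = 1)
    (heven : Even (Finset.univ.filter fun i => σ i = -1).card) :
    Noncontextual n (fun _ => 0) σ := by
  classical
  -- every partial product is ±1
  have hsq : ∀ s : Finset (Fin n), (∏ k ∈ s, σ k) = 1 ∨ (∏ k ∈ s, σ k) = -1 := by
    intro s
    have h : (∏ k ∈ s, σ k) * (∏ k ∈ s, σ k) = 1 := by
      rw [← Finset.prod_mul_distrib]
      apply Finset.prod_eq_one
      intro i _
      rcases hσ i with h | h <;> rw [h] <;> norm_num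
    exact mul_self_eq_one_iff.mp h
  -- total product is 1
  have hprod : (∏ i, σ i) = 1 := by
    have hsplit : (∏ i ∈ Finset.univ.filter (fun i => σ i = -1), σ i) *
        (∏ i ∈ Finset.univ.filter (fun i => ¬ σ i = -1), σ i) = ∏ i, σ i :=
      Finset.prod_filter_mul_prod_filter_not _ _ _
    have h1 : (∏ i ∈ Finset.univ.filter (fun i => σ i = -1), σ i) = 1 := by
      rw [Finset.prod_congr rfl (fun i hi => (Finset.mem_filter.mp hi).2),
        Finset.prod_const]
      exact heven.neg_one_pow
    have h2 : (∏ i ∈ Finset.univ.filter (fun i => ¬ σ i = -1), σ i) = 1 := by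
      apply Finset.prod_eq_one
      intro i hi
      rcases hσ i with h | h
      · exact absurd h (Finset.mem_filter.mp hi).2
      · exact h
    rw [← hsplit, h1, h2, one_mul]
  set g : ℕ → ℝ := fun m => ∏ k ∈ Finset.univ.filter (fun k : Fin n => (k : ℕ) < m), σ k
    with hg
  have hgpm : ∀ m, g m = 1 ∨ g m = -1 := fun m => hsq _
  have hg0 : g 0 = 1 := by simp [hg]
  have hstep : ∀ m (hm : m < n), g (m + 1) = g m * σ ⟨m, hm⟩ := by
    intro m hm
    have hins : Finset.univ.filter (fun k : Fin n => (k : ℕ) < m + 1) =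
        insert (⟨m, hm⟩ : Fin n) (Finset.univ.filter (fun k : Fin n => (k : ℕ) < m)) := by
      ext k
      simp [Nat.lt_succ_iff_lt_or_eq, Fin.ext_iff, or_comm]
      omega
    rw [hg]
    simp only
    rw [hins, Finset.prod_insert (by simp)]
    ring
  have hgn : g n = 1 := by
    have huniv : Finset.univ.filter (fun k : Fin n => (k : ℕ) < n) = Finset.univ := by
      ext k; simp [k.isLt]
    rw [hg]; simp only; rw [huniv]; exact hprod
  set f : Fin n → ℝ := fun i => g i.val with hf
  have hfpm : ∀ i, f i = 1 ∨ f i = -1 := fun i => hgpm _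
  have hedge : ∀ i : Fin n, f i * f (i + 1) = σ i := by
    intro i
    have hσsq : σ i * σ i = 1 := by
      rcases hσ i with h | h <;> rw [h] <;> norm_num
    have hfsq : f i * f i = 1 := by
      rcases hfpm i with h | h <;> rw [h] <;> norm_num
    by_cases hc : (i : ℕ) + 1 < n
    · have h1n : ((1 : Fin n) : ℕ) = 1 := by
        rw [Fin.val_one']
        exact Nat.mod_eq_of_lt (by omega)
      have hval : ((i + 1 : Fin n) : ℕ) = (i : ℕ) + 1 := by
        rw [Fin.val_add, h1n, Nat.mod_eq_of_lt hc]
      have hthis : f (i + 1) = f i * σ i := by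
        show g ((i + 1 : Fin n) : ℕ) = g (i : ℕ) * σ i
        rw [hval, hstep i.val i.isLt]
      rw [hthis, ← mul_assoc, hfsq, one_mul]
    · have hlast : (i : ℕ) + 1 = n := by have := i.isLt; omega
      have h1n : ((1 : Fin n) : ℕ) = 1 := by
        rw [Fin.val_one']
        exact Nat.mod_eq_of_lt (by omega)
      have hi1 : (i + 1 : Fin n) = 0 := by
        apply Fin.ext
        rw [Fin.val_add, h1n, hlast, Nat.mod_self]
        simp
      have hfi : f i * σ i = 1 := by
        have h1 : g ((i : ℕ) + 1) = g (i : ℕ) * σ i := by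
          rw [hstep (i : ℕ) i.isLt]
        rw [hlast, hgn] at h1
        exact h1.symm
      rw [hi1]
      have hf0 : f 0 = 1 := by
        show g ((0 : Fin n) : ℕ) = 1
        have : ((0 : Fin n) : ℕ) = 0 := rfl
        rw [this, hg0]
      rw [hf0, mul_one]
      calc f i = f i * (σ i * σ i) := by rw [hσsq, mul_one]
        _ = (f i * σ i) * σ i := by ring
        _ = σ i := by rw [hfi, one_mul]
  refine ⟨2, ![1/2, 1/2], ![f, fun i => -f i], ?_, ?_, ?_, ?_, ?_⟩
  · intro j; fin_cases j <;> norm_num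
  · rw [Fin.sum_univ_two]; norm_num
  · intro j i; fin_cases j <;> rcases hfpm i with h | h <;> simp [h]
  · intro i
    rw [Fin.sum_univ_two]
    simp only [Matrix.cons_val_zero, Matrix.cons_val_one, Matrix.head_cons]
    ring
  · intro i
    rw [Fin.sum_univ_two]
    simp only [Matrix.cons_val_zero, Matrix.cons_val_one, Matrix.head_cons]
    nlinarith [hedge i]
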